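/- arXiv:math/0605787 — 6 statements merged into one kernel-verified Lean document; each statement's English description precedes it below -/
import Mathlib

section
/- Let O be a commutative integral domain, R = O[ξ_1,…,ξ_n] the polynomial ring in n variables over O, 𝔪 = (ξ_1,…,ξ_n) the ideal of R generated by the variables, J an ideal of R with J ⊆ 𝔪, and h a nonzero element of O. Then J + (hξ_1,…,hξ_n) = (J + (h)) ∩ 𝔪 as ideals of R. -/
open MvPolynomial

lemma mem_span_range_X_iff_constantCoeff {O : Type*} [CommRing O] {n : ℕ}
    {p : MvPolynomial (Fin n) O} :
    p ∈ Ideal.span (Set.range (X : Fin n → MvPolynomial (Fin n) O)) ↔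
      constantCoeff p = 0 := by
  rw [← Set.image_univ, MvPolynomial.mem_ideal_span_X_image]
  simp only [Set.mem_univ, true_and]
  constructor
  · intro H
    rw [constantCoeff_eq, ← notMem_support_iff]
    intro h0
    obtain ⟨i, hi⟩ := H 0 h0
    simp at hi
  · intro H m hm
    by_contra hc
    push_neg at hc
    have : m = 0 := by ext i; simpa using hc i
    rw [this] at hm
    rw [constantCoeff_eq, ← notMem_support_iff] at H
    exact H hm

/-- For `R = O[ξ₁,…,ξₙ]` over a domain `O`, an ideal `J ⊆ 𝔪 = (ξ₁,…,ξₙ)` and a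
nonzero `h ∈ O`, one has `J + (hξ₁,…,hξₙ) = (J + (h)) ∩ 𝔪`. -/
theorem stmt_4 {O : Type*} [CommRing O] [IsDomain O] (n : ℕ)
    (J : Ideal (MvPolynomial (Fin n) O))
    (hJ : J ≤ Ideal.span (Set.range (X : Fin n → MvPolynomial (Fin n) O)))
    (h : O) (hh : h ≠ 0) :
    J + Ideal.span (Set.range fun i : Fin n => (C h : MvPolynomial (Fin n) O) * X i) =
      (J + Ideal.span {(C h : MvPolynomial (Fin n) O)}) ⊓
        Ideal.span (Set.range (X : Fin n → MvPolynomial (Fin n) O)) := by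
  apply le_antisymm
  · apply sup_le
    · exact le_inf le_sup_left hJ
    · rw [Ideal.span_le]
      rintro _ ⟨i, rfl⟩
      refine ⟨?_, ?_⟩
      · exact Ideal.mem_sup_right (Ideal.mem_span_singleton.2 ⟨X i, rfl⟩)
      · exact Ideal.mul_mem_left _ _ (Ideal.subset_span ⟨i, rfl⟩)
  · rintro p ⟨hp1, hp2⟩
    obtain ⟨j, hj, z, hz, rfl⟩ := Submodule.mem_sup.1 hp1
    obtain ⟨q, rfl⟩ := Ideal.mem_span_singleton.1 hz
    refine Submodule.add_mem_sup hj ?_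
    have hq : constantCoeff q = 0 := by
      have hmem : C h * q ∈ Ideal.span (Set.range (X : Fin n → MvPolynomial (Fin n) O)) := by
        have := Submodule.sub_mem _ hp2 (hJ hj)
        simpa using this
      rw [mem_span_range_X_iff_constantCoeff] at hmem
      simp only [map_mul, constantCoeff_C] at hmem
      exact (mul_eq_zero.1 hmem).resolve_left hh
    rw [← mem_span_range_X_iff_constantCoeff] at hq
    obtain ⟨f, rfl⟩ := Ideal.mem_span_range_iff_exists_fun.1 hq
    rw [Finset.mul_sum]
    refine Ideal.sum_mem _ fun i _ => ?_
    have : C h * (f i * X i) = f i * (C h * X i) := by ring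
    rw [this]
    exact Ideal.mul_mem_left _ _ (Ideal.subset_span ⟨i, rfl⟩)
end

section
/- Let α_1,α_2 be positive rationals, d a rational, and g ∈ ℂ[x_1,x_2] squarefree, weighted homogeneous of degree d for the weights (α_1,α_2), with g ∈ (x_1,x_2)^3. Let u ∈ ℂ[x_1,x_2,x_3] and v ∈ ℂ[x_2,x_3] be the unique polynomials with x_3·g'_{x_1} + g'_{x_2} = u·x_1 − v·x_2, set h = (x_1−x_2x_3)·g ∈ ℂ[x_1,x_2,x_3], and define the derivations δ_1 = α_1x_1∂_1 + α_2x_2∂_2 + (α_1−α_2)x_3∂_3, δ_2 = g'_{x_2}∂_1 − g'_{x_1}∂_2 + (x_3u−v)∂_3, δ_3 = (x_1−x_2x_3)∂_3. Then: (a) δ_1(h) = (α_1+d)·h, δ_2(h) = u·h, δ_3(h) = −x_2·h, so each δ_i is a logarithmic derivation along h; (b) the determinant of the 3×3 matrix whose (i,j)-entry is the coefficient of ∂_j in δ_i equals −d·h, a nonzero constant multiple of h; (c) h belongs to the ideal generated by its three partial derivatives (condition H(h)). -/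
open MvPolynomial
lemma aux_X_mul_pderiv_monomial (i : Fin 3) (m : Fin 3 →₀ ℕ) (c : ℂ) :
    X i * pderiv i (monomial m c) = monomial m (c * m i) := by
  rw [pderiv_monomial]
  rw [X, monomial_mul]
  by_cases h : m i = 0
  · simp [h]
  · rw [add_tsub_cancel_of_le (by simpa [Finsupp.single_le_iff] using Nat.one_le_iff_ne_zero.2 h),
      one_mul]

lemma aux_pderiv_zero (i : Fin 3) (p : MvPolynomial (Fin 3) ℂ)
    (h : ∀ m ∈ p.support, m i = 0) : pderiv i p = 0 := by
  conv_lhs => rw [p.as_sum]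
  rw [map_sum]
  refine Finset.sum_eq_zero fun m hm => ?_
  rw [pderiv_monomial, h m hm]
  simp

lemma aux_euler (p : MvPolynomial (Fin 3) ℂ) (c0 c1 c2 e : ℂ)
    (h : ∀ m ∈ p.support, c0 * (m 0 : ℂ) + c1 * (m 1 : ℂ) + c2 * (m 2 : ℂ) = e) :
    C c0 * (X 0 * pderiv 0 p) + C c1 * (X 1 * pderiv 1 p) + C c2 * (X 2 * pderiv 2 p)
      = C e * p := by
  conv_lhs => rw [p.as_sum]
  conv_rhs => rw [p.as_sum]
  rw [Finset.mul_sum]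
  simp only [map_sum, Finset.mul_sum, ← Finset.sum_add_distrib]
  refine Finset.sum_congr rfl fun m hm => ?_
  rw [aux_X_mul_pderiv_monomial, aux_X_mul_pderiv_monomial, aux_X_mul_pderiv_monomial,
    C_mul_monomial, C_mul_monomial, C_mul_monomial, C_mul_monomial, ← map_add, ← map_add]
  congr 1
  rw [← h m hm]; ring

/-- Saito's criterion computation for `h = (x₁ - x₂x₃)·g` with `g ∈ ℂ[x₁,x₂]`
squarefree, weighted homogeneous of degree `d` for positive rational weights
`(α₁,α₂)`, and `g ∈ (x₁,x₂)³`.  Variables `0,1,2` of `Fin 3` stand for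
`x₁,x₂,x₃`; `ℂ[x₁,x₂]` is embedded as the polynomials not involving `x₃`.
Conclusions: (a) `δ₁(h) = (α₁+d)h`, `δ₂(h) = u·h`, `δ₃(h) = -x₂·h`, so the δᵢ are
logarithmic along `h`; (b) the determinant of the coefficient matrix of
`δ₁,δ₂,δ₃` equals `-d·h` with `d ≠ 0`; (c) `h` lies in the ideal of its partial
derivatives. -/
theorem stmt_6 (α1 α2 d : ℚ) (hα1 : 0 < α1) (hα2 : 0 < α2)
    (g u v : MvPolynomial (Fin 3) ℂ)
    (hgx3 : ∀ m ∈ g.support, m 2 = 0)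
    (hsq : Squarefree g)
    (hwh : ∀ m ∈ g.support, α1 * (m 0 : ℚ) + α2 * (m 1 : ℚ) = d)
    (hcube : g ∈ (Ideal.span {(X 0 : MvPolynomial (Fin 3) ℂ), X 1}) ^ 3)
    (hv : ∀ m ∈ v.support, m 0 = 0)
    (huv : X 2 * pderiv 0 g + pderiv 1 g = u * X 0 - v * X 1) :
    ∀ h : MvPolynomial (Fin 3) ℂ, h = (X 0 - X 1 * X 2) * g →
    -- (a) : the three derivations are logarithmic along h, with explicit cofactors
    (C ((α1 : ℂ)) * X 0 * pderiv 0 h + C ((α2 : ℂ)) * X 1 * pderiv 1 h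
        + C ((α1 : ℂ) - (α2 : ℂ)) * X 2 * pderiv 2 h = C ((α1 : ℂ) + (d : ℂ)) * h) ∧
    (pderiv 1 g * pderiv 0 h - pderiv 0 g * pderiv 1 h + (X 2 * u - v) * pderiv 2 h
        = u * h) ∧
    ((X 0 - X 1 * X 2) * pderiv 2 h = - X 1 * h) ∧
    -- (b) : Saito determinant
    (Matrix.det
      !![C ((α1 : ℂ)) * X 0, C ((α2 : ℂ)) * X 1, C ((α1 : ℂ) - (α2 : ℂ)) * X 2;
         pderiv 1 g, - pderiv 0 g, X 2 * u - v;
         0, 0, X 0 - X 1 * X 2] = C (-(d : ℂ)) * h ∧ d ≠ 0) ∧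
    -- (c) : condition H(h)
    (h ∈ Ideal.span {pderiv 0 h, pderiv 1 h, pderiv 2 h}) := by
  intro h hh
  subst hh
  -- g does not involve x₃
  have pg2 : pderiv 2 g = 0 := aux_pderiv_zero 2 g hgx3
  -- Euler relation
  have heu : C (α1 : ℂ) * (X 0 * pderiv 0 g) + C (α2 : ℂ) * (X 1 * pderiv 1 g)
      = C (d : ℂ) * g := by
    have := aux_euler g (α1 : ℂ) (α2 : ℂ) 0 (d : ℂ) (fun m hm => by
      have h2 := congrArg (Rat.cast : ℚ → ℂ) (hwh m hm)
      push_cast at h2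
      linear_combination h2)
    simpa using this
  -- derivatives of h
  have p0 : pderiv 0 ((X 0 - X 1 * X 2) * g) = g + (X 0 - X 1 * X 2) * pderiv 0 g := by
    simp [pderiv_mul, pderiv_X, Pi.single_apply]; ring
  have p1 : pderiv 1 ((X 0 - X 1 * X 2) * g)
      = - X 2 * g + (X 0 - X 1 * X 2) * pderiv 1 g := by
    simp [pderiv_mul, pderiv_X, Pi.single_apply]; ring
  have p2 : pderiv 2 ((X 0 - X 1 * X 2) * g) = - X 1 * g := by
    simp [pderiv_mul, pderiv_X, pg2, Pi.single_apply]; ring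
  -- g ≠ 0, d ≥ 0, d ≠ 0
  have hg0 : g ≠ 0 := hsq.ne_zero
  obtain ⟨m, hm⟩ := (support_nonempty.2 hg0)
  have hd0 : 0 ≤ d := by rw [← hwh m hm]; positivity
  have hdne : d ≠ 0 := by
    intro hd
    subst hd
    have hm0 : m 0 = 0 := by
      have := hwh m hm
      have h0 : (0:ℚ) ≤ α1 * (m 0 : ℚ) := by positivity
      have h1 : (0:ℚ) ≤ α2 * (m 1 : ℚ) := by positivity
      have : α1 * (m 0 : ℚ) = 0 := by linarith
      have := mul_eq_zero.1 this
      rcases this with h | h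
      · exact absurd h hα1.ne'
      · exact_mod_cast h
    have hm1 : m 1 = 0 := by
      have := hwh m hm
      have h0 : (0:ℚ) ≤ α1 * (m 0 : ℚ) := by positivity
      have h1 : (0:ℚ) ≤ α2 * (m 1 : ℚ) := by positivity
      have : α2 * (m 1 : ℚ) = 0 := by linarith
      rcases mul_eq_zero.1 this with h | h
      · exact absurd h hα2.ne'
      · exact_mod_cast h
    have hm2 : m 2 = 0 := hgx3 m hm
    have hmz : m = 0 := by
      ext i
      fin_cases i <;> assumption
    -- g has nonzero constant coefficient, contradicting g ∈ (X0,X1)^3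
    have hcc : constantCoeff g ≠ 0 := by
      rw [constantCoeff_eq]
      have := mem_support_iff.1 hm
      rwa [hmz] at this
    have hmem : g ∈ Ideal.span {(X 0 : MvPolynomial (Fin 3) ℂ), X 1} :=
      Ideal.pow_le_self (by norm_num) hcube
    rw [Ideal.mem_span_pair] at hmem
    obtain ⟨a, b, hab⟩ := hmem
    apply hcc
    rw [← hab]
    simp
  constructor
  · rw [p0, p1, p2, map_add, map_sub]
    linear_combination (X 0 - X 1 * X 2) * heu
  constructor
  · rw [p0, p1, p2]
    linear_combination g * huv
  constructor
  · rw [p2]; ring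
  constructor
  constructor
  · rw [Matrix.det_fin_three]
    simp only [Matrix.det_fin_three, Matrix.of_apply, Matrix.cons_val', Matrix.cons_val_zero,
      Matrix.empty_val', Matrix.cons_val_fin_one, Matrix.cons_val_one, Matrix.head_cons,
      Matrix.head_fin_const, Matrix.cons_val_two, Matrix.tail_cons, map_neg]
    linear_combination (X 1 * X 2 - X 0) * heu
  · exact hdne
  · -- condition H(h)
    have hne : ((α1 : ℂ) + (d : ℂ)) ≠ 0 := by
      have : α1 + d ≠ 0 := by positivity
      exact_mod_cast this
    have ha1 : C ((α1 : ℂ)) * X 0 * pderiv 0 ((X 0 - X 1 * X 2) * g)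
        + C ((α2 : ℂ)) * X 1 * pderiv 1 ((X 0 - X 1 * X 2) * g)
        + C ((α1 : ℂ) - (α2 : ℂ)) * X 2 * pderiv 2 ((X 0 - X 1 * X 2) * g)
        = C ((α1 : ℂ) + (d : ℂ)) * ((X 0 - X 1 * X 2) * g) := by
      rw [p0, p1, p2, map_add, map_sub]
      linear_combination (X 0 - X 1 * X 2) * heu
    have key : (X 0 - X 1 * X 2) * g
        = C (((α1 : ℂ) + (d : ℂ))⁻¹) * (C ((α1 : ℂ)) * X 0 * pderiv 0 ((X 0 - X 1 * X 2) * g)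
          + C ((α2 : ℂ)) * X 1 * pderiv 1 ((X 0 - X 1 * X 2) * g)
          + C ((α1 : ℂ) - (α2 : ℂ)) * X 2 * pderiv 2 ((X 0 - X 1 * X 2) * g)) := by
      rw [ha1, ← mul_assoc, ← C_mul, inv_mul_cancel₀ hne, C_1, one_mul]
    set I := Ideal.span {pderiv 0 ((X 0 - X 1 * X 2) * g), pderiv 1 ((X 0 - X 1 * X 2) * g),
      pderiv 2 ((X 0 - X 1 * X 2) * g)}
    have m0 : pderiv 0 ((X 0 - X 1 * X 2) * g) ∈ I := Ideal.subset_span (by simp)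
    have m1 : pderiv 1 ((X 0 - X 1 * X 2) * g) ∈ I := Ideal.subset_span (by simp)
    have m2 : pderiv 2 ((X 0 - X 1 * X 2) * g) ∈ I := Ideal.subset_span (by simp)
    rw [key]
    exact Ideal.mul_mem_left _ _ (add_mem (add_mem (Ideal.mul_mem_left _ _ m0)
      (Ideal.mul_mem_left _ _ m1)) (Ideal.mul_mem_left _ _ m2))
end

section
/- Let α_1,α_2 be positive rationals, d a rational, and g ∈ ℂ[x_1,x_2] squarefree, weighted homogeneous of degree d for the weights (α_1,α_2), with g ∈ (x_1,x_2)^3. Let u ∈ ℂ[x_1,x_2,x_3] and v ∈ ℂ[x_2,x_3] be the unique polynomials with x_3·g'_{x_1} + g'_{x_2} = u·x_1 − v·x_2, set h = (x_1−x_2x_3)·g, and define the derivations δ_1 = α_1x_1∂_1 + α_2x_2∂_2 + (α_1−α_2)x_3∂_3, δ_2 = g'_{x_2}∂_1 − g'_{x_1}∂_2 + (x_3u−v)∂_3, δ_3 = (x_1−x_2x_3)∂_3 of R = ℂ[x_1,x_2,x_3]. Then the R-module Der(−log h) = {δ : δ is a ℂ-linear derivation of R with δ(h) ∈ (h)} is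 a free R-module with basis {δ_1, δ_2, δ_3}. -/
open MvPolynomial

abbrev R3 := MvPolynomial (Fin 3) ℂ

lemma derivation_apply3 (δ : Derivation ℂ R3 R3) (p : R3) :
    δ p = pderiv 0 p * δ (X 0) + pderiv 1 p * δ (X 1) + pderiv 2 p * δ (X 2) := by
  have h : δ = δ (X 0) • (pderiv 0 : Derivation ℂ R3 R3) + δ (X 1) • pderiv 1
      + δ (X 2) • pderiv 2 := by
    apply derivation_ext
    intro i
    fin_cases i <;>
      simp [pderiv_X_self, pderiv_X_of_ne, Derivation.add_apply, Derivation.smul_apply]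
  conv_lhs => rw [h]
  simp [Derivation.add_apply, Derivation.smul_apply, smul_eq_mul]
  ring

lemma X_mul_pderiv_monomial (i : Fin 3) (m : Fin 3 →₀ ℕ) (c : ℂ) :
    X i * pderiv i (monomial m c) = monomial m (c * (m i : ℂ)) := by
  rw [pderiv_monomial]
  by_cases h : m i = 0
  · simp [h]
  · rw [X, monomial_mul, one_mul]
    congr 1
    rw [add_comm, tsub_add_cancel_of_le]
    rwa [Finsupp.single_le_iff, Nat.one_le_iff_ne_zero]

lemma euler_aux (a1 a2 dd : ℂ) (g : R3)
    (hwh : ∀ m ∈ g.support, a1 * (m 0 : ℂ) + a2 * (m 1 : ℂ) = dd) :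
    C a1 * (X 0 * pderiv 0 g) + C a2 * (X 1 * pderiv 1 g) = C dd * g := by
  conv_lhs => rw [g.as_sum]
  conv_rhs => rw [g.as_sum]
  rw [map_sum (pderiv 0) _ g.support, map_sum (pderiv 1) _ g.support]
  rw [Finset.mul_sum, Finset.mul_sum, Finset.mul_sum, Finset.mul_sum, Finset.mul_sum,
    ← Finset.sum_add_distrib]
  apply Finset.sum_congr rfl
  intro m hm
  rw [X_mul_pderiv_monomial, X_mul_pderiv_monomial, C_mul_monomial, C_mul_monomial,
    C_mul_monomial, ← map_add]
  congr 1
  have := hwh m hm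
  linear_combination coeff m g * this

lemma pderiv_zero_of_support (j : Fin 3) (g : R3) (hg : ∀ m ∈ g.support, m j = 0) :
    pderiv j g = 0 := by
  conv_lhs => rw [g.as_sum]
  rw [map_sum (pderiv j) _ g.support]
  refine Finset.sum_eq_zero fun m hm => ?_
  rw [pderiv_monomial, hg m hm]
  simp

lemma prime_l : Prime (X 0 - X 1 * X 2 : R3) := by
  have h2 : (X 1 * X 2 : R3) = X (Fin.succ 0) * X (Fin.succ 1) := rfl
  have key : finSuccEquiv ℂ 2 (X 0 - X 1 * X 2 : R3)
      = Polynomial.X - Polynomial.C (X 0 * X 1) := by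
    rw [map_sub, h2, map_mul, finSuccEquiv_X_zero, finSuccEquiv_X_succ, finSuccEquiv_X_succ,
      ← map_mul]
  have : Prime (finSuccEquiv ℂ 2 (X 0 - X 1 * X 2 : R3)) := by
    rw [key]; exact Polynomial.prime_X_sub_C _
  exact (MulEquiv.prime_iff (finSuccEquiv ℂ 2)).mp this

lemma l_not_dvd (p : R3) (hp : p ≠ 0) (hx : ∀ m ∈ p.support, m 2 = 0) :
    ¬ (X 0 - X 1 * X 2 : R3) ∣ p := by
  intro hdvd
  classical
  set σ := Equiv.swap (0 : Fin 3) 2 with hσ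
  set E : R3 ≃ₐ[ℂ] Polynomial (MvPolynomial (Fin 2) ℂ) :=
    (renameEquiv ℂ σ).trans (finSuccEquiv ℂ 2) with hE
  have hEp : ∀ q : R3, E q = finSuccEquiv ℂ 2 (rename σ q) := fun q => rfl
  -- degree of E p is 0
  have hdeg0 : (E p).natDegree = 0 := by
    rw [hEp, natDegree_finSuccEquiv]
    refine Nat.le_antisymm (degreeOf_le_iff.mpr fun m hm => ?_) (Nat.zero_le _)
    rw [support_rename_of_injective σ.injective] at hm
    obtain ⟨m', hm', rfl⟩ := Finset.mem_image.mp hm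
    have h0 : (0 : Fin 3) = σ 2 := by simp [hσ]
    rw [h0, Finsupp.mapDomain_apply σ.injective, hx m' hm']
  -- degree of E l is 1
  have hren : rename σ (X 0 - X 1 * X 2 : R3) = X 2 - X 1 * X 0 := by
    simp [hσ, map_sub, map_mul, Equiv.swap_apply_left, Equiv.swap_apply_right, Equiv.swap_apply_of_ne_of_ne (by decide : (1:Fin 3) ≠ 0) (by decide : (1:Fin 3) ≠ 2)]
  have hEl : E (X 0 - X 1 * X 2 : R3)
      = Polynomial.C (-(X 0)) * Polynomial.X + Polynomial.C (X 1) := by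
    rw [hEp, hren]
    have e2 : (X 2 : R3) = X (Fin.succ 1) := rfl
    have e1 : (X 1 : R3) = X (Fin.succ 0) := rfl
    rw [map_sub, map_mul, e2, e1, finSuccEquiv_X_zero, finSuccEquiv_X_succ, finSuccEquiv_X_succ]
    rw [map_neg]
    ring
  have hdeg1 : (E (X 0 - X 1 * X 2 : R3)).natDegree = 1 := by
    rw [hEl]
    exact Polynomial.natDegree_linear (neg_ne_zero.mpr (X_ne_zero 0))
  have hd : E (X 0 - X 1 * X 2 : R3) ∣ E p := map_dvd E hdvd
  have hEp0 : E p ≠ 0 := fun h => hp (by simpa using congrArg E.symm h)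
  have := Polynomial.natDegree_le_of_dvd hd hEp0
  omega

noncomputable def Dconj : Derivation ℂ R3 R3 where
  toLinearMap :=
    ((finSuccEquiv ℂ 2).symm.toLinearMap.comp
      ((Polynomial.derivative (R := MvPolynomial (Fin 2) ℂ)).restrictScalars ℂ)).comp
      (finSuccEquiv ℂ 2).toLinearMap
  map_one_eq_zero' := by simp
  leibniz' a b := by
    simp only [LinearMap.comp_apply, LinearMap.restrictScalars_apply, AlgEquiv.toLinearMap_apply,
      map_mul, Polynomial.derivative_mul, map_add, smul_eq_mul]
    simp only [AlgEquiv.symm_apply_apply]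
    ring

lemma Dconj_eq : (Dconj : Derivation ℂ R3 R3) = pderiv 0 := by
  apply derivation_ext
  intro i
  have : ∀ p : R3, Dconj p = (finSuccEquiv ℂ 2).symm (Polynomial.derivative (finSuccEquiv ℂ 2 p)) :=
    fun p => rfl
  fin_cases i
  · rw [this, show ((⟨0, by norm_num⟩ : Fin 3)) = 0 from rfl, finSuccEquiv_X_zero]
    simp [pderiv_X_self]
  · rw [this, show (X (⟨1, by norm_num⟩ : Fin 3) : R3) = X (Fin.succ 0) from rfl,
      finSuccEquiv_X_succ]
    simp [pderiv_X_of_ne]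
  · rw [this, show (X (⟨2, by norm_num⟩ : Fin 3) : R3) = X (Fin.succ 1) from rfl,
      finSuccEquiv_X_succ]
    simp [pderiv_X_of_ne]

lemma finSuccEquiv_pderiv (p : R3) :
    Polynomial.derivative (finSuccEquiv ℂ 2 p) = finSuccEquiv ℂ 2 (pderiv 0 p) := by
  have h1 : pderiv 0 p = Dconj p := by rw [Dconj_eq]
  have h2 : Dconj p = (finSuccEquiv ℂ 2).symm (Polynomial.derivative (finSuccEquiv ℂ 2 p)) := rfl
  rw [h1, h2, AlgEquiv.apply_symm_apply]

lemma not_dvd_all_pderiv (q : R3) (hq : Prime q) (h : ∀ j, q ∣ pderiv j q) : False := by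
  classical
  have hdeg : ∀ j : Fin 3, degreeOf j q = 0 := by
    intro j
    set σ := Equiv.swap (0 : Fin 3) j with hσ
    set Q : R3 := rename σ q with hQ
    have hQ0 : Q ≠ 0 := fun hz => hq.ne_zero (by
      have := congrArg (rename σ.symm) hz
      simpa [hQ, rename_rename, Equiv.symm_comp_self] using this)
    have hdvd : Q ∣ pderiv 0 Q := by
      have h1 : rename σ q ∣ rename σ (pderiv j q) := map_dvd _ (h j)
      rwa [← pderiv_rename σ.injective, Equiv.swap_apply_right] at h1
    have hEdvd : finSuccEquiv ℂ 2 Q ∣ Polynomial.derivative (finSuccEquiv ℂ 2 Q) := by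
      rw [finSuccEquiv_pderiv]; exact map_dvd _ hdvd
    have hnd : (finSuccEquiv ℂ 2 Q).natDegree = 0 := by
      by_contra hne
      have hder0 : Polynomial.derivative (finSuccEquiv ℂ 2 Q) ≠ 0 := fun h0 =>
        hne (Polynomial.natDegree_eq_zero_of_derivative_eq_zero h0)
      have h1 := Polynomial.natDegree_le_of_dvd hEdvd hder0
      have h2 := Polynomial.natDegree_derivative_lt hne
      omega
    rw [natDegree_finSuccEquiv] at hnd
    have h3 := degreeOf_rename_of_injective (p := q) σ.injective j
    rw [Equiv.swap_apply_right] at h3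
    rw [← h3]
    exact hnd
  -- hence q is a constant
  have hsupp : ∀ m ∈ q.support, m = 0 := by
    intro m hm
    ext j
    have := degreeOf_le_iff.mp (le_of_eq (hdeg j)) m hm
    simpa using this
  have hqC : q = C (coeff 0 q) := by
    apply MvPolynomial.ext
    intro m
    by_cases hm : m = 0
    · subst hm; simp
    · rw [coeff_C, if_neg (fun h => hm h.symm)]
      by_contra hc
      exact hm (hsupp m (mem_support_iff.mpr hc))
  have hc0 : coeff 0 q ≠ 0 := fun h0 => hq.ne_zero (by rw [hqC, h0, map_zero])
  exact hq.not_isUnit (IsUnit.of_mul_eq_one (a := q) (C (coeff 0 q)⁻¹)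
    (by nth_rewrite 1 [hqC]; rw [← map_mul, mul_inv_cancel₀ hc0, map_one]))

lemma dvd_of_prime_dvd {A : Type*} [CommMonoidWithZero A] [UniqueFactorizationMonoid A]
    (g f : A) (hg : Squarefree g) (H : ∀ q, Prime q → q ∣ g → q ∣ f) : g ∣ f := by
  revert hg H
  refine WfDvdMonoid.induction_on_irreducible g ?_ ?_ ?_
  · intro hsq _
    exact (hsq 0 (by simp)).dvd
  · intro u hu _ _
    exact hu.dvd
  · intro a i ha hi IH hsq H
    have hp : Prime i := (UniqueFactorizationMonoid.irreducible_iff_prime).mp hi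
    have hsa : Squarefree a := hsq.of_mul_right
    have haf : a ∣ f := IH hsa fun q hq hqa => H q hq (hqa.mul_left i)
    have hif : i ∣ f := H i hp (Dvd.intro a rfl)
    have hia : ¬ i ∣ a := fun hd => hi.not_isUnit (hsq i (mul_dvd_mul_left i hd))
    obtain ⟨t, rfl⟩ := haf
    rcases hp.dvd_mul.mp hif with h1 | h1
    · exact absurd h1 hia
    · obtain ⟨s, rfl⟩ := h1
      exact ⟨s, (mul_left_comm a i s).trans (mul_assoc i a s).symm⟩

lemma key_dvd (g : R3) (hsq : Squarefree g) (hg2 : pderiv 2 g = 0)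
    (hgx3 : ∀ m ∈ g.support, m 2 = 0) (f : R3)
    (hf : ∀ j : Fin 3, (X 0 - X 1 * X 2) * g ∣ f * pderiv j ((X 0 - X 1 * X 2) * g)) :
    (X 0 - X 1 * X 2) * g ∣ f := by
  set l : R3 := X 0 - X 1 * X 2 with hl
  have hg0 : g ≠ 0 := hsq.ne_zero
  have hpl : ∀ j : Fin 3, pderiv j (l * g) = l * pderiv j g + g * pderiv j l := by
    intro j
    rw [Derivation.leibniz]
    simp [smul_eq_mul]
  have hl0 : pderiv 0 l = 1 := by simp [hl, pderiv_X_self, pderiv_X_of_ne]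
  have hl1 : pderiv 1 l = -(X 2) := by
    simp [hl, pderiv_X_self, pderiv_X_of_ne]
  have hl2 : pderiv 2 l = -(X 1) := by
    simp [hl, pderiv_X_self, pderiv_X_of_ne]
  -- l divides f
  have hlf : l ∣ f := by
    have h2 := hf 2
    rw [hpl 2, hg2, hl2, mul_zero, zero_add] at h2
    have : l * g ∣ (-(f * X 1)) * g := by
      refine dvd_trans h2 (dvd_of_eq ?_)
      ring
    have h3 : l ∣ -(f * X 1) := (mul_dvd_mul_iff_right hg0).mp this
    rcases prime_l.dvd_mul.mp ((dvd_neg).mp h3) with h4 | h4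
    · exact h4
    · exact absurd h4 (l_not_dvd (X 1) (X_ne_zero 1) (by
        intro m hm
        rw [support_X] at hm
        simp only [Finset.mem_singleton] at hm
        subst hm
        simp [Finsupp.single_apply]))
  -- every prime factor of g divides f
  have hgf : g ∣ f := by
    refine dvd_of_prime_dvd g f hsq fun q hq hqg => ?_
    by_contra hqf
    have hql : ¬ q ∣ l := by
      intro hd
      have hassoc := hq.associated_of_dvd prime_l hd
      exact (l_not_dvd g hg0 hgx3) (hassoc.symm.dvd.trans hqg)
    have hdiv : ∀ j : Fin 3, q ∣ pderiv j g := by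
      intro j
      have h1 : q ∣ f * pderiv j (l * g) := hqg.trans ((dvd_mul_left g l).trans (hf j))
      rw [hpl j, mul_add] at h1
      have hj : q ∣ f * (g * pderiv j l) := Dvd.dvd.mul_left (hqg.mul_right (pderiv j l)) f
      have h2 : q ∣ f * (l * pderiv j g) := by
        have := dvd_sub h1 hj
        simpa using this
      rcases hq.dvd_mul.mp h2 with h3 | h3
      · exact absurd h3 hqf
      · rcases hq.dvd_mul.mp h3 with h4 | h4
        · exact absurd h4 hql
        · exact h4
    obtain ⟨s, hgs⟩ := hqg
    have hqs : ¬ q ∣ s := by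
      intro hd
      obtain ⟨s', rfl⟩ := hd
      exact hq.not_isUnit (hsq q ⟨s', by rw [hgs]; ring⟩)
    have hqq : ∀ j : Fin 3, q ∣ pderiv j q := by
      intro j
      have h1 : pderiv j g = q * pderiv j s + s * pderiv j q := by
        rw [hgs, Derivation.leibniz]
        simp [smul_eq_mul]
      have h2 : q ∣ s * pderiv j q := by
        have := dvd_sub (hdiv j) (Dvd.intro _ rfl : q ∣ q * pderiv j s)
        rw [h1] at this
        simpa using this
      rcases hq.dvd_mul.mp h2 with h3 | h3
      · exact absurd h3 hqs
      · exact h3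
    exact absurd hqq (fun hh => not_dvd_all_pderiv q hq hh)
  -- combine
  obtain ⟨t, rfl⟩ := hgf
  have : l ∣ g * t := hlf
  rcases prime_l.dvd_mul.mp this with h1 | h1
  · exact absurd h1 (l_not_dvd g hg0 hgx3)
  · obtain ⟨s, rfl⟩ := h1
    exact ⟨s, by ring⟩

lemma mem_span_h {h p : R3} : p ∈ Ideal.span {h} ↔ ∃ c, c * h = p := Ideal.mem_span_singleton'

open Matrix in
lemma det_dvd (h : R3) (η : Fin 3 → Derivation ℂ R3 R3)
    (hη : ∀ k, η k h ∈ Ideal.span {h})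
    (hkey : ∀ f : R3, (∀ j : Fin 3, h ∣ f * pderiv j h) → h ∣ f) :
    h ∣ (Matrix.of fun k j : Fin 3 => η k (X j)).det := by
  classical
  set N : Matrix (Fin 3) (Fin 3) R3 := Matrix.of fun k j => η k (X j) with hN
  choose p hp using fun k => Ideal.mem_span_singleton'.mp (hη k)
  have hmv : N *ᵥ (fun j => pderiv j h) = fun k => p k * h := by
    funext k
    simp only [Matrix.mulVec, dotProduct, Fin.sum_univ_three]
    rw [hp k, derivation_apply3 (η k) h]
    have h0 : ∀ j, N k j = η k (X j) := fun j => rfl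
    rw [h0 0, h0 1, h0 2]
    ring
  have h2 : N.adjugate *ᵥ (fun k => p k * h) = N.det • (fun j => pderiv j h) := by
    rw [← hmv, Matrix.mulVec_mulVec, Matrix.adjugate_mul, Matrix.smul_mulVec,
      Matrix.one_mulVec]
  refine hkey N.det fun j => ?_
  have h3 : N.det * pderiv j h = ∑ k : Fin 3, N.adjugate j k * (p k * h) := by
    have := congrFun h2 j
    simp only [Pi.smul_apply, smul_eq_mul] at this
    rw [← this]
    simp [Matrix.mulVec, dotProduct]
  rw [h3]
  exact Finset.dvd_sum fun k _ => Dvd.dvd.mul_left (dvd_mul_left h (p k)) _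

/-- The submodule of logarithmic derivations `Der(-log h)`: `ℂ`-linear derivations
`δ` of `ℂ[x₁,x₂,x₃]` with `δ(h) ∈ (h)`. -/
noncomputable def logDer (h : MvPolynomial (Fin 3) ℂ) :
    Submodule (MvPolynomial (Fin 3) ℂ)
      (Derivation ℂ (MvPolynomial (Fin 3) ℂ) (MvPolynomial (Fin 3) ℂ)) where
  carrier := {δ | δ h ∈ Ideal.span {h}}
  zero_mem' := by simp
  add_mem' := by
    intro a b ha hb
    simpa using Ideal.add_mem _ ha hb
  smul_mem' := by
    intro r δ hδ
    simpa using Ideal.mul_mem_left _ r hδ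

lemma mem_logDer {h : R3} {δ : Derivation ℂ R3 R3} : δ ∈ logDer h ↔ δ h ∈ Ideal.span {h} :=
  Iff.rfl


set_option maxHeartbeats 1000000 in
open Matrix in
/-- Lemma 3.7(i): for `g ∈ ℂ[x₁,x₂]` squarefree, weighted homogeneous of degree
`d` for positive rational weights `(α₁,α₂)`, with `g ∈ (x₁,x₂)³`, and
`h = (x₁-x₂x₃)·g`, the module `Der(-log h)` is free with basis `{δ₁,δ₂,δ₃}`,
where `δ₁ = α₁x₁∂₁ + α₂x₂∂₂ + (α₁-α₂)x₃∂₃`,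
`δ₂ = g'_{x₂}∂₁ - g'_{x₁}∂₂ + (x₃u-v)∂₃`, `δ₃ = (x₁-x₂x₃)∂₃`.
Variables `0,1,2` of `Fin 3` stand for `x₁,x₂,x₃`. -/
theorem stmt_7 (α1 α2 d : ℚ) (hα1 : 0 < α1) (hα2 : 0 < α2)
    (g u v : MvPolynomial (Fin 3) ℂ)
    (hgx3 : ∀ m ∈ g.support, m 2 = 0)
    (hsq : Squarefree g)
    (hwh : ∀ m ∈ g.support, α1 * (m 0 : ℚ) + α2 * (m 1 : ℚ) = d)
    (hcube : g ∈ (Ideal.span {(X 0 : MvPolynomial (Fin 3) ℂ), X 1}) ^ 3)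
    (hv : ∀ m ∈ v.support, m 0 = 0)
    (huv : X 2 * pderiv 0 g + pderiv 1 g = u * X 0 - v * X 1) :
    ∀ δ1 δ2 δ3 : Derivation ℂ (MvPolynomial (Fin 3) ℂ) (MvPolynomial (Fin 3) ℂ),
      δ1 = mkDerivation ℂ
          ![C ((α1 : ℂ)) * X 0, C ((α2 : ℂ)) * X 1, C ((α1 : ℂ) - (α2 : ℂ)) * X 2] →
      δ2 = mkDerivation ℂ ![pderiv 1 g, - pderiv 0 g, X 2 * u - v] →
      δ3 = mkDerivation ℂ ![0, 0, X 0 - X 1 * X 2] →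
      Submodule.span (MvPolynomial (Fin 3) ℂ) {δ1, δ2, δ3}
          = logDer ((X 0 - X 1 * X 2) * g) ∧
        LinearIndependent (MvPolynomial (Fin 3) ℂ) ![δ1, δ2, δ3] := by
  
  intro δ1 δ2 δ3 h1 h2 h3
  classical
  have hg0 : g ≠ 0 := hsq.ne_zero
  have hg2 : pderiv 2 g = 0 := pderiv_zero_of_support 2 g hgx3
  have hwhC : ∀ m ∈ g.support, (α1 : ℂ) * (m 0 : ℂ) + (α2 : ℂ) * (m 1 : ℂ) = (d : ℂ) := by
    intro m hm
    have h0 := congrArg (fun q : ℚ => (q : ℂ)) (hwh m hm)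
    push_cast at h0
    exact h0
  have hE : C (α1:ℂ) * (X 0 * pderiv 0 g) + C (α2:ℂ) * (X 1 * pderiv 1 g)
      = C (d:ℂ) * g := euler_aux _ _ _ g hwhC
  -- d ≠ 0
  have hd0 : d ≠ 0 := by
    intro hd
    have hm0 : ∀ m ∈ g.support, m = 0 := by
      intro m hm
      have hq := hwh m hm
      rw [hd] at hq
      have ha : (0:ℚ) ≤ (m 0 : ℚ) := Nat.cast_nonneg _
      have hb : (0:ℚ) ≤ (m 1 : ℚ) := Nat.cast_nonneg _
      have ha' : 0 ≤ α1 * (m 0 : ℚ) := mul_nonneg hα1.le ha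
      have hb' : 0 ≤ α2 * (m 1 : ℚ) := mul_nonneg hα2.le hb
      have h00 : (m 0 : ℚ) = 0 := by
        have : α1 * (m 0 : ℚ) = 0 := by linarith
        rcases mul_eq_zero.mp this with h | h
        · exact absurd h hα1.ne'
        · exact h
      have h11 : (m 1 : ℚ) = 0 := by
        have : α2 * (m 1 : ℚ) = 0 := by linarith
        rcases mul_eq_zero.mp this with h | h
        · exact absurd h hα2.ne'
        · exact h
      have h22 := hgx3 m hm
      ext j
      fin_cases j
      · simpa using (Nat.cast_injective (R := ℚ)) (by simpa using h00)
      · simpa using (Nat.cast_injective (R := ℚ)) (by simpa using h11)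
      · simpa using h22
    have hgC : g = C (coeff 0 g) := by
      apply MvPolynomial.ext
      intro m
      by_cases hm : m = 0
      · subst hm; simp
      · rw [coeff_C, if_neg (fun hh => hm hh.symm)]
        by_contra hc
        exact hm (hm0 m (mem_support_iff.mpr hc))
    have hcg : coeff 0 g ≠ 0 := fun h0 => hg0 (by rw [hgC, h0, map_zero])
    have hunit : IsUnit g := IsUnit.of_mul_eq_one (a := g) (C (coeff 0 g)⁻¹)
      (by nth_rewrite 1 [hgC]; rw [← _root_.map_mul, mul_inv_cancel₀ hcg, _root_.map_one])
    have hIg : g ∈ Ideal.span {(X 0 : R3), X 1} :=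
      Ideal.pow_le_self (by norm_num) hcube
    have hone : (1:R3) ∈ Ideal.span {(X 0 : R3), X 1} := by
      rw [← Ideal.eq_top_iff_one]
      exact Ideal.eq_top_of_isUnit_mem _ hIg hunit
    obtain ⟨a, b, hab⟩ := Ideal.mem_span_pair.mp hone
    have := congrArg (eval (fun _ : Fin 3 => (0:ℂ))) hab
    simp at this
  have hdC : (d : ℂ) ≠ 0 := by exact_mod_cast hd0
  have hh0 : (X 0 - X 1 * X 2) * g ≠ 0 := mul_ne_zero prime_l.ne_zero hg0
  -- values of the derivations on the variables
  have hδ1X0 : δ1 (X 0) = C (α1:ℂ) * X 0 := by rw [h1, mkDerivation_X]; rfl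
  have hδ1X1 : δ1 (X 1) = C (α2:ℂ) * X 1 := by rw [h1, mkDerivation_X]; rfl
  have hδ1X2 : δ1 (X 2) = C ((α1:ℂ) - (α2:ℂ)) * X 2 := by rw [h1, mkDerivation_X]; rfl
  have hδ2X0 : δ2 (X 0) = pderiv 1 g := by rw [h2, mkDerivation_X]; rfl
  have hδ2X1 : δ2 (X 1) = -pderiv 0 g := by rw [h2, mkDerivation_X]; rfl
  have hδ2X2 : δ2 (X 2) = X 2 * u - v := by rw [h2, mkDerivation_X]; rfl
  have hδ3X0 : δ3 (X 0) = 0 := by rw [h3, mkDerivation_X]; rfl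
  have hδ3X1 : δ3 (X 1) = 0 := by rw [h3, mkDerivation_X]; rfl
  have hδ3X2 : δ3 (X 2) = X 0 - X 1 * X 2 := by rw [h3, mkDerivation_X]; rfl
  -- derivatives of l
  have hpd0l : pderiv 0 (X 0 - X 1 * X 2 : R3) = 1 := by
    simp [pderiv_X_self, pderiv_X_of_ne]
  have hpd1l : pderiv 1 (X 0 - X 1 * X 2 : R3) = -(X 2) := by
    simp [pderiv_X_self, pderiv_X_of_ne]
  have hpd2l : pderiv 2 (X 0 - X 1 * X 2 : R3) = -(X 1) := by
    simp [pderiv_X_self, pderiv_X_of_ne]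
  -- the three derivations are logarithmic
  have hmem1 : δ1 ∈ logDer ((X 0 - X 1 * X 2) * g) := by
    rw [mem_logDer, Derivation.leibniz]
    have e1 : δ1 g = C (d:ℂ) * g := by
      rw [derivation_apply3 δ1 g, hδ1X0, hδ1X1, hδ1X2, hg2]
      linear_combination hE
    have e2 : δ1 (X 0 - X 1 * X 2) = C (α1:ℂ) * (X 0 - X 1 * X 2) := by
      rw [derivation_apply3 _ _, hpd0l, hpd1l, hpd2l, hδ1X0, hδ1X1, hδ1X2,
        show C ((α1:ℂ) - (α2:ℂ)) = C (α1:ℂ) - C (α2:ℂ) from map_sub C _ _]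
      ring
    rw [smul_eq_mul, smul_eq_mul, e1, e2]
    exact Ideal.mem_span_singleton'.mpr ⟨C (d:ℂ) + C (α1:ℂ), by ring⟩
  have hmem2 : δ2 ∈ logDer ((X 0 - X 1 * X 2) * g) := by
    rw [mem_logDer, Derivation.leibniz]
    have e1 : δ2 g = 0 := by
      rw [derivation_apply3 δ2 g, hδ2X0, hδ2X1, hδ2X2, hg2]
      ring
    have e2 : δ2 (X 0 - X 1 * X 2) = u * (X 0 - X 1 * X 2) := by
      rw [derivation_apply3 _ _, hpd0l, hpd1l, hpd2l, hδ2X0, hδ2X1, hδ2X2]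
      linear_combination huv
    rw [smul_eq_mul, smul_eq_mul, e1, e2]
    exact Ideal.mem_span_singleton'.mpr ⟨u, by ring⟩
  have hmem3 : δ3 ∈ logDer ((X 0 - X 1 * X 2) * g) := by
    rw [mem_logDer, Derivation.leibniz]
    have e1 : δ3 g = 0 := by
      rw [derivation_apply3 δ3 g, hδ3X0, hδ3X1, hδ3X2, hg2]
      ring
    have e2 : δ3 (X 0 - X 1 * X 2) = -(X 1) * (X 0 - X 1 * X 2) := by
      rw [derivation_apply3 _ _, hpd0l, hpd1l, hpd2l, hδ3X0, hδ3X1, hδ3X2]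
      ring
    rw [smul_eq_mul, smul_eq_mul, e1, e2]
    exact Ideal.mem_span_singleton'.mpr ⟨-(X 1), by ring⟩
  -- coefficient matrix
  set M : Matrix (Fin 3) (Fin 3) R3 := Matrix.of fun i j => (![δ1, δ2, δ3] i) (X j) with hM
  have hM00 : M 0 0 = C (α1:ℂ) * X 0 := hδ1X0
  have hM01 : M 0 1 = C (α2:ℂ) * X 1 := hδ1X1
  have hM02 : M 0 2 = C ((α1:ℂ) - (α2:ℂ)) * X 2 := hδ1X2
  have hM10 : M 1 0 = pderiv 1 g := hδ2X0
  have hM11 : M 1 1 = -pderiv 0 g := hδ2X1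
  have hM12 : M 1 2 = X 2 * u - v := hδ2X2
  have hM20 : M 2 0 = 0 := hδ3X0
  have hM21 : M 2 1 = 0 := hδ3X1
  have hM22 : M 2 2 = X 0 - X 1 * X 2 := hδ3X2
  have hMdet : M.det = -(C (d:ℂ)) * ((X 0 - X 1 * X 2) * g) := by
    rw [Matrix.det_fin_three, hM00, hM01, hM02, hM10, hM11, hM12, hM20, hM21, hM22,
      show C ((α1:ℂ) - (α2:ℂ)) = C (α1:ℂ) - C (α2:ℂ) from map_sub C _ _]
    linear_combination (X 1 * X 2 - X 0 : R3) * hE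
  have hMdet0 : M.det ≠ 0 := by
    rw [hMdet]
    exact mul_ne_zero (neg_ne_zero.mpr (fun hc => hdC (by simpa using hc))) hh0
  constructor
  · -- span equality
    apply le_antisymm
    · rw [Submodule.span_le]
      rintro x (rfl | rfl | rfl)
      · exact hmem1
      · exact hmem2
      · exact hmem3
    · intro δ hδ
      rw [mem_logDer] at hδ
      set w : Fin 3 → R3 := fun j => δ (X j) with hw
      -- each Cramer determinant is divisible by h
      have hdvd : ∀ i : Fin 3, ((X 0 - X 1 * X 2) * g) ∣ Matrix.cramer Mᵀ w i := by
        intro i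
        rw [Matrix.cramer_transpose_apply]
        have hupd : M.updateRow i w
            = Matrix.of fun k j => ((Function.update ![δ1, δ2, δ3] i δ) k) (X j) := by
          funext k j
          rw [Matrix.updateRow_apply, Matrix.of_apply, Function.update_apply]
          by_cases hk : k = i
          · simp [hk, hw]
          · simp [hk]
            rfl
        rw [hupd]
        refine det_dvd _ _ (fun k => ?_) (key_dvd g hsq hg2 hgx3)
        rcases eq_or_ne k i with hk | hk
        · rw [Function.update_apply, if_pos hk]
          exact hδ
        · rw [Function.update_apply, if_neg hk]
          have : ∀ kk : Fin 3, ![δ1, δ2, δ3] kk ∈ logDer ((X 0 - X 1 * X 2) * g) := by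
            intro kk
            fin_cases kk
            · exact hmem1
            · exact hmem2
            · exact hmem3
          exact this k
      choose b hb using hdvd
      -- Cramer's rule
      have hcr : ∀ j : Fin 3, (∑ i : Fin 3, Matrix.cramer Mᵀ w i * M i j) = M.det * w j := by
        intro j
        have hc := congrFun (Matrix.mulVec_cramer Mᵀ w) j
        simp only [Matrix.mulVec, dotProduct, Matrix.transpose_apply, Fin.sum_univ_three,
          Pi.smul_apply, smul_eq_mul, Matrix.det_transpose] at hc
        simpa [Fin.sum_univ_three, mul_comm] using hc
      have hsum : ∀ j : Fin 3, (∑ i : Fin 3, b i * M i j) = -(C (d:ℂ)) * w j := by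
        intro j
        have hc := hcr j
        rw [hMdet] at hc
        have hc2 : ((X 0 - X 1 * X 2) * g) * (∑ i : Fin 3, b i * M i j)
            = ((X 0 - X 1 * X 2) * g) * (-(C (d:ℂ)) * w j) := by
          rw [Finset.mul_sum]
          have : ∀ i : Fin 3, ((X 0 - X 1 * X 2) * g) * (b i * M i j)
              = Matrix.cramer Mᵀ w i * M i j := by
            intro i
            rw [hb i]; ring
          rw [Finset.sum_congr rfl fun i _ => this i, hc]
          ring
        exact mul_left_cancel₀ hh0 hc2
      -- express δ as a combination
      have hrep : δ = (-(C ((d:ℂ)⁻¹)) * b 0) • δ1 + (-(C ((d:ℂ)⁻¹)) * b 1) • δ2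
          + (-(C ((d:ℂ)⁻¹)) * b 2) • δ3 := by
        apply derivation_ext
        intro j
        have hCd : (C ((d:ℂ)⁻¹) : R3) * C (d:ℂ) = 1 := by
          rw [← _root_.map_mul, inv_mul_cancel₀ hdC, _root_.map_one]
        have hsj := hsum j
        rw [Fin.sum_univ_three] at hsj
        have hMj : ∀ i : Fin 3, M i j = (![δ1, δ2, δ3] i) (X j) := fun i => rfl
        rw [hMj 0, hMj 1, hMj 2] at hsj
        simp only [Derivation.add_apply, Derivation.smul_apply, smul_eq_mul]
        have : (![δ1, δ2, δ3] 0) (X j) = δ1 (X j) := rfl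
        calc δ (X j) = -(C ((d:ℂ)⁻¹)) * (-(C (d:ℂ)) * δ (X j)) := by
              rw [show -(C ((d:ℂ)⁻¹) : R3) * (-(C (d:ℂ)) * δ (X j))
                  = (C ((d:ℂ)⁻¹) * C (d:ℂ)) * δ (X j) from by ring, hCd, one_mul]
          _ = -(C ((d:ℂ)⁻¹)) * (b 0 * δ1 (X j) + b 1 * δ2 (X j) + b 2 * δ3 (X j)) := by
              rw [← hsj]; rfl
          _ = -(C ((d:ℂ)⁻¹)) * b 0 * δ1 (X j) + -(C ((d:ℂ)⁻¹)) * b 1 * δ2 (X j)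
              + -(C ((d:ℂ)⁻¹)) * b 2 * δ3 (X j) := by ring
      rw [hrep]
      refine Submodule.add_mem _ (Submodule.add_mem _ ?_ ?_) ?_ <;>
        refine Submodule.smul_mem _ _ (Submodule.subset_span ?_)
      · left; rfl
      · right; left; rfl
      · right; right; rfl
  · -- linear independence
    rw [Fintype.linearIndependent_iff]
    intro c hc
    have hcj : ∀ j : Fin 3, c 0 * M 0 j + c 1 * M 1 j + c 2 * M 2 j = 0 := by
      intro j
      have := DFunLike.congr_fun hc (X j)
      rw [Fin.sum_univ_three] at this
      have hMj : ∀ i : Fin 3, M i j = (![δ1, δ2, δ3] i) (X j) := fun i => rfl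
      rw [hMj 0, hMj 1, hMj 2]
      simpa [Derivation.add_apply, Derivation.smul_apply, smul_eq_mul] using this
    have hvm : Matrix.vecMul c M = 0 := by
      funext j
      simpa [Matrix.vecMul, dotProduct, Fin.sum_univ_three] using hcj j
    have hc0 : c = 0 := by
      by_contra hne
      exact hMdet0 (Matrix.exists_vecMul_eq_zero_iff.mp ⟨c, hne, hvm⟩)
    intro i
    rw [hc0]
    rfl
end

section
/- Let g ∈ ℂ[x_1,x_2] be a squarefree homogeneous polynomial of degree p ≥ 3. In R = ℂ[x_1,x_2,x_3,ξ_1,ξ_2,ξ_3] set a = g'_{x_2}(x_3,1), b = g'_{x_1}(x_3,1), c = g(x_3,1) (images under the substitution x_1 ↦ x_3, x_2 ↦ 1), and define the ideals I_1 = (ξ_3, g'_{x_2}ξ_1 − g'_{x_1}ξ_2), I_2 = (x_1−x_2x_3, x_2·a·ξ_1 − x_2·b·ξ_2 + p·c·ξ_3), and I = ((x_1−x_2x_3)ξ_3, g'_{x_2}ξ_1 − g'_{x_1}ξ_2 + p·x_2^{p−2}·c·ξ_3, (x_2·a·ξ_1 − x_2·b·ξ_2 + p·c·ξ_3)·ξ_3).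 Then I = I_1 ∩ I_2. -/
open MvPolynomial

namespace Stmt11Aux

noncomputable section

abbrev R6 := MvPolynomial (Fin 6) ℂ

lemma degree_fin2 (d : Fin 2 →₀ ℕ) : d.degree = d 0 + d 1 := by
  rw [Finsupp.degree_apply, Finset.sum_subset (Finset.subset_univ d.support)
    (fun x _ hx => Finsupp.notMem_support_iff.mp hx), Fin.sum_univ_two]

lemma mem_deg {φ : MvPolynomial (Fin 2) ℂ} {n : ℕ} (hφ : φ.IsHomogeneous n)
    {m : Fin 2 →₀ ℕ} (hm : m ∈ φ.support) : m 0 + m 1 = n := by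
  rw [← degree_fin2]
  by_contra h
  exact mem_support_iff.mp hm (hφ.coeff_eq_zero h)

lemma X_mul_pderiv_monomial (i : Fin 2) (m : Fin 2 →₀ ℕ) (c : ℂ) :
    X i * pderiv i (monomial m c) = monomial m (c * m i) := by
  rw [pderiv_monomial]
  rcases Nat.eq_zero_or_pos (m i) with h | h
  · simp [h]
  · have hle : Finsupp.single i 1 ≤ m := Finsupp.single_le_iff.mpr h
    rw [← pow_one (X i : MvPolynomial (Fin 2) ℂ), ← monomial_single_add,
      add_tsub_cancel_of_le hle]

lemma euler {φ : MvPolynomial (Fin 2) ℂ} {n : ℕ} (hφ : φ.IsHomogeneous n) :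
    X 0 * pderiv 0 φ + X 1 * pderiv 1 φ = C (n : ℂ) * φ := by
  conv_lhs => rw [← φ.support_sum_monomial_coeff]
  conv_rhs => rw [← φ.support_sum_monomial_coeff]
  rw [map_sum (pderiv 0), map_sum (pderiv 1), Finset.mul_sum, Finset.mul_sum, Finset.mul_sum,
    ← Finset.sum_add_distrib]
  refine Finset.sum_congr rfl fun m hm => ?_
  rw [X_mul_pderiv_monomial, X_mul_pderiv_monomial, C_mul_monomial, ← map_add]
  congr 1
  have hd := mem_deg hφ hm
  push_cast [← hd]
  ring

lemma pderiv_homog {φ : MvPolynomial (Fin 2) ℂ} {n : ℕ} (hφ : φ.IsHomogeneous n)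
    (i : Fin 2) : (pderiv i φ).IsHomogeneous (n - 1) := by
  conv => enter [1]; rw [← φ.support_sum_monomial_coeff]
  rw [map_sum]
  apply IsHomogeneous.sum
  intro m hm
  rcases Nat.eq_zero_or_pos (m i) with h | h
  · rw [pderiv_monomial, h]
    norm_num
    exact isHomogeneous_zero _ _ _
  · rw [pderiv_monomial]
    apply isHomogeneous_monomial
    have hd := mem_deg hφ hm
    rw [degree_fin2, Finsupp.tsub_apply, Finsupp.tsub_apply]
    fin_cases i <;> simp [Finsupp.single_apply, Fin.isValue] at h hd ⊢ <;> omega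

lemma scale {A : Type*} [CommSemiring A] [Algebra ℂ A] {φ : MvPolynomial (Fin 2) ℂ} {n : ℕ}
    (hφ : φ.IsHomogeneous n) (c : A) (v : Fin 2 → A) :
    aeval (fun i => c * v i) φ = c ^ n * aeval v φ := by
  rw [aeval_def, aeval_def, eval₂_eq', eval₂_eq', Finset.mul_sum]
  refine Finset.sum_congr rfl fun m hm => ?_
  have hd := mem_deg hφ hm
  rw [Fin.prod_univ_two, Fin.prod_univ_two, mul_pow, mul_pow, ← hd, pow_add]
  ring

lemma sub_aeval_mem (v : Fin 6 → R6) (S : Set R6)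
    (hS : ∀ i, X i - v i ∈ Ideal.span S) (f : R6) :
    f - aeval v f ∈ Ideal.span S := by
  have h : (Ideal.Quotient.mkₐ ℂ (Ideal.span S)).comp (aeval v)
      = Ideal.Quotient.mkₐ ℂ (Ideal.span S) := by
    apply algHom_ext
    intro i
    simp only [AlgHom.comp_apply, aeval_X, Ideal.Quotient.mkₐ_eq_mk]
    rw [Ideal.Quotient.eq, show v i - X i = -(X i - v i) by ring]
    exact (Ideal.span S).neg_mem (hS i)
  have h2 := AlgHom.congr_fun h f
  simp only [AlgHom.comp_apply, Ideal.Quotient.mkₐ_eq_mk] at h2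
  exact Ideal.Quotient.eq.mp h2.symm

lemma aeval_eval (x : Fin 2 → ℂ) (q : MvPolynomial (Fin 2) ℂ) : aeval x q = eval x q := rfl

lemma fix_aeval (Ψ : R6 →ₐ[ℂ] R6) (hΨ : Ψ (X 2) = X 2) (h : MvPolynomial (Fin 2) ℂ) :
    Ψ (aeval ![X 2, 1] h) = aeval ![X 2, 1] h := by
  have hv : (fun i => Ψ (![(X 2 : R6), 1] i)) = ![X 2, 1] := by
    funext j; fin_cases j <;> simp [hΨ]
  rw [comp_aeval_apply, hv]

def Φ : R6 →ₐ[ℂ] R6 := aeval (fun i => if i = 0 then X 1 * X 2 else X i)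

def σ₀ : R6 →ₐ[ℂ] R6 := aeval (fun i => if i = 5 then 0 else X i)

def ρ : R6 →ₐ[ℂ] R6 := aeval (fun i => if i = 3 then 1 else if i = 4 then 0 else X i)

@[simp] lemma Φ_X0 : Φ (X 0) = X 1 * X 2 := by simp [Φ]
@[simp] lemma Φ_X1 : Φ (X 1) = X 1 := by simp [Φ]
@[simp] lemma Φ_X2 : Φ (X 2) = X 2 := by simp [Φ]
@[simp] lemma Φ_X3 : Φ (X 3) = X 3 := by simp [Φ]
@[simp] lemma Φ_X4 : Φ (X 4) = X 4 := by simp [Φ]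
@[simp] lemma Φ_X5 : Φ (X 5) = X 5 := by simp [Φ]
@[simp] lemma Φ_C (z : ℂ) : Φ (C z) = C z := by simp [Φ, algebraMap_eq]

@[simp] lemma σ₀_X0 : σ₀ (X 0) = X 0 := by simp [σ₀]
@[simp] lemma σ₀_X1 : σ₀ (X 1) = X 1 := by simp [σ₀]
@[simp] lemma σ₀_X2 : σ₀ (X 2) = X 2 := by simp [σ₀]
@[simp] lemma σ₀_X3 : σ₀ (X 3) = X 3 := by simp [σ₀]
@[simp] lemma σ₀_X4 : σ₀ (X 4) = X 4 := by simp [σ₀]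
@[simp] lemma σ₀_X5 : σ₀ (X 5) = 0 := by simp [σ₀]
@[simp] lemma σ₀_C (z : ℂ) : σ₀ (C z) = C z := by simp [σ₀, algebraMap_eq]

@[simp] lemma ρ_X1 : ρ (X 1) = X 1 := by simp [ρ]
@[simp] lemma ρ_X2 : ρ (X 2) = X 2 := by simp [ρ]
@[simp] lemma ρ_X3 : ρ (X 3) = 1 := by simp [ρ]
@[simp] lemma ρ_X4 : ρ (X 4) = 0 := by simp [ρ]

lemma sub_Φ_mem (f : R6) : f - Φ f ∈ Ideal.span {(X 0 : R6) - X 1 * X 2} := by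
  apply sub_aeval_mem
  intro i
  rcases eq_or_ne i 0 with h | h
  · subst h
    simp only [if_pos rfl]
    exact Ideal.subset_span rfl
  · simp only [if_neg h, sub_self]
    exact Ideal.zero_mem _

lemma mem_span_X5_of_σ₀ (f : R6) (h : σ₀ f = 0) : f ∈ Ideal.span {(X 5 : R6)} := by
  have h0 : f - σ₀ f ∈ Ideal.span {(X 5 : R6)} := by
    apply sub_aeval_mem
    intro i
    rcases eq_or_ne i 5 with h | h
    · subst h
      have h5 : (X 5 : R6) - (if (5 : Fin 6) = 5 then (0 : R6) else X 5) = X 5 := by norm_num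
      rw [h5]
      exact Ideal.subset_span rfl
    · simp only [if_neg h, sub_self]
      exact Ideal.zero_mem _
  rwa [h, sub_zero] at h0

end

end Stmt11Aux

open Stmt11Aux

/-- Lemma 3.9: for `g ∈ ℂ[x₁,x₂]` squarefree homogeneous of degree `p ≥ 3`, in
`R = ℂ[x₁,x₂,x₃,ξ₁,ξ₂,ξ₃]` (variables `0,…,5` of `Fin 6` standing for
`x₁,x₂,x₃,ξ₁,ξ₂,ξ₃`), with `a = g'_{x₂}(x₃,1)`, `b = g'_{x₁}(x₃,1)`,
`c = g(x₃,1)`, the ideal `I` generated by `(x₁-x₂x₃)ξ₃`,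
`g'_{x₂}ξ₁ - g'_{x₁}ξ₂ + p·x₂^{p-2}·c·ξ₃` and `(x₂aξ₁ - x₂bξ₂ + p·c·ξ₃)ξ₃`
equals `I₁ ∩ I₂`, where `I₁ = (ξ₃, g'_{x₂}ξ₁ - g'_{x₁}ξ₂)` and
`I₂ = (x₁-x₂x₃, x₂aξ₁ - x₂bξ₂ + p·c·ξ₃)`. -/
theorem stmt_11 (p : ℕ) (hp : 3 ≤ p) (g : MvPolynomial (Fin 2) ℂ)
    (hsq : Squarefree g) (hhom : g.IsHomogeneous p) :
    ∀ G1 G2 a b c : MvPolynomial (Fin 6) ℂ,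
      G1 = aeval ![(X 0 : MvPolynomial (Fin 6) ℂ), X 1] (pderiv 0 g) →
      G2 = aeval ![(X 0 : MvPolynomial (Fin 6) ℂ), X 1] (pderiv 1 g) →
      a = aeval ![(X 2 : MvPolynomial (Fin 6) ℂ), 1] (pderiv 1 g) →
      b = aeval ![(X 2 : MvPolynomial (Fin 6) ℂ), 1] (pderiv 0 g) →
      c = aeval ![(X 2 : MvPolynomial (Fin 6) ℂ), 1] g →
      Ideal.span {((X 0 : MvPolynomial (Fin 6) ℂ) - X 1 * X 2) * X 5,
          G2 * X 3 - G1 * X 4 + C ((p : ℂ)) * X 1 ^ (p - 2) * c * X 5,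
          (X 1 * a * X 3 - X 1 * b * X 4 + C ((p : ℂ)) * c * X 5) * X 5}
        = Ideal.span {(X 5 : MvPolynomial (Fin 6) ℂ), G2 * X 3 - G1 * X 4}
          ⊓ Ideal.span {(X 0 : MvPolynomial (Fin 6) ℂ) - X 1 * X 2,
              X 1 * a * X 3 - X 1 * b * X 4 + C ((p : ℂ)) * c * X 5} := by
  intro G1 G2 a b c hG1 hG2 ha hb hc
  have hp0 : (p : ℂ) ≠ 0 := Nat.cast_ne_zero.mpr (by omega)
  have hg1hom := pderiv_homog hhom 0
  have hg2hom := pderiv_homog hhom 1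
  -- `a ≠ 0`
  have hane : a ≠ 0 := by
    intro ha0
    have key : aeval ![(X 2 : R6), 1] (pderiv 1 g) = 0 := by rw [← ha]; exact ha0
    have hz : ∀ z : ℂ, aeval ![z, (1 : ℂ)] (pderiv 1 g) = 0 := by
      intro z
      have h1 := congrArg (aeval (fun i : Fin 6 => if i = 2 then z else 0) : R6 →ₐ[ℂ] ℂ) key
      rw [comp_aeval_apply, map_zero] at h1
      have hv : (fun j => (aeval (fun i : Fin 6 => if i = 2 then z else 0) : R6 →ₐ[ℂ] ℂ)
          (![(X 2 : R6), 1] j)) = ![z, (1 : ℂ)] := by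
        funext j; fin_cases j <;> simp
      rwa [hv] at h1
    have hXg : (X 1 : MvPolynomial (Fin 2) ℂ) * pderiv 1 g = 0 := by
      apply MvPolynomial.funext
      intro x
      rw [eval_mul, eval_X, map_zero]
      rcases eq_or_ne (x 1) 0 with h | h
      · rw [h, zero_mul]
      · have h2 := scale hg2hom (x 1) ![x 0 / x 1, 1]
        have hv : (fun i => x 1 * (![x 0 / x 1, (1 : ℂ)] i)) = x := by
          funext j; fin_cases j <;> simp
          · rw [mul_comm, div_mul_cancel₀ _ h]
        rw [hv, hz (x 0 / x 1), mul_zero] at h2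
        rw [← aeval_eval, h2, mul_zero]
    have hg2 : pderiv 1 g = 0 := by
      rcases mul_eq_zero.mp hXg with h | h
      · exact absurd h (X_ne_zero _)
      · exact h
    have he := euler hhom
    rw [hg2, mul_zero, add_zero] at he
    have hgeq : g = X 0 * (C ((p : ℂ)⁻¹) * pderiv 0 g) := by
      have h1 : C ((p : ℂ)⁻¹) * (C ((p : ℂ)) * g) = C ((p : ℂ)⁻¹) * (X 0 * pderiv 0 g) := by
        rw [he]
      rw [← mul_assoc, ← C_mul, inv_mul_cancel₀ hp0, C_1, one_mul] at h1
      conv_lhs => rw [h1]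
      ring
    have hh1hom : (C ((p : ℂ)⁻¹) * pderiv 0 g).IsHomogeneous (p - 1) := hg1hom.C_mul _
    have hd1 : pderiv 1 (C ((p : ℂ)⁻¹) * pderiv 0 g) = 0 := by
      have h1 := congrArg (pderiv 1) hgeq
      rw [hg2, pderiv_mul, pderiv_X_of_ne (by decide), zero_mul, zero_add] at h1
      rcases mul_eq_zero.mp h1.symm with h | h
      · exact absurd h (X_ne_zero _)
      · exact h
    have he2 := euler hh1hom
    rw [hd1, mul_zero, add_zero] at he2
    have hp10 : ((p - 1 : ℕ) : ℂ) ≠ 0 := Nat.cast_ne_zero.mpr (by omega)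
    have hh1eq : C ((p : ℂ)⁻¹) * pderiv 0 g
        = X 0 * (C (((p - 1 : ℕ) : ℂ))⁻¹ * pderiv 0 (C ((p : ℂ)⁻¹) * pderiv 0 g)) := by
      have h1 : C (((p - 1 : ℕ) : ℂ))⁻¹ * (C (((p - 1 : ℕ) : ℂ)) * (C ((p : ℂ)⁻¹) * pderiv 0 g))
          = C (((p - 1 : ℕ) : ℂ))⁻¹ * (X 0 * pderiv 0 (C ((p : ℂ)⁻¹) * pderiv 0 g)) := by
        rw [he2]
      rw [← mul_assoc, ← C_mul, inv_mul_cancel₀ hp10, C_1, one_mul] at h1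
      conv_lhs => rw [h1]
      ring
    have hdvd : X 0 * X 0 ∣ g := by
      refine ⟨C (((p - 1 : ℕ) : ℂ))⁻¹ * pderiv 0 (C ((p : ℂ)⁻¹) * pderiv 0 g), ?_⟩
      conv_lhs => rw [hgeq]
      conv_lhs => rw [hh1eq]
      ring
    have hunit := hsq _ hdvd
    obtain ⟨v, hv⟩ := hunit.exists_right_inv
    have h1 := congrArg constantCoeff hv
    simp at h1
  -- abbreviations
  set E := G2 * X 3 - G1 * X 4 with hE
  set Hh := X 1 * a * X 3 - X 1 * b * X 4 + C ((p : ℂ)) * c * X 5 with hH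
  set u := (X 0 : MvPolynomial (Fin 6) ℂ) - X 1 * X 2 with hu
  set F := E + C ((p : ℂ)) * X 1 ^ (p - 2) * c * X 5 with hF
  -- basic memberships
  have hξ1 : (X 5 : R6) ∈ Ideal.span {(X 5 : R6), E} := Ideal.subset_span (Set.mem_insert _ _)
  have hE1 : E ∈ Ideal.span {(X 5 : R6), E} :=
    Ideal.subset_span (Set.mem_insert_of_mem _ (Set.mem_singleton _))
  have hu2 : u ∈ Ideal.span {u, Hh} := Ideal.subset_span (Set.mem_insert _ _)
  have hH2 : Hh ∈ Ideal.span {u, Hh} :=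
    Ideal.subset_span (Set.mem_insert_of_mem _ (Set.mem_singleton _))
  have huξ : u * X 5 ∈ Ideal.span {u * X 5, F, Hh * X 5} :=
    Ideal.subset_span (Set.mem_insert _ _)
  have hFI : F ∈ Ideal.span {u * X 5, F, Hh * X 5} :=
    Ideal.subset_span (Set.mem_insert_of_mem _ (Set.mem_insert _ _))
  have hHξ : Hh * X 5 ∈ Ideal.span {u * X 5, F, Hh * X 5} :=
    Ideal.subset_span (Set.mem_insert_of_mem _ (Set.mem_insert_of_mem _ (Set.mem_singleton _)))
  -- Φ facts
  have hΦa : Φ a = a := by rw [ha]; exact fix_aeval _ Φ_X2 _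
  have hΦb : Φ b = b := by rw [hb]; exact fix_aeval _ Φ_X2 _
  have hΦc : Φ c = c := by rw [hc]; exact fix_aeval _ Φ_X2 _
  have hσa : σ₀ a = a := by rw [ha]; exact fix_aeval _ σ₀_X2 _
  have hσb : σ₀ b = b := by rw [hb]; exact fix_aeval _ σ₀_X2 _
  have hσc : σ₀ c = c := by rw [hc]; exact fix_aeval _ σ₀_X2 _
  have hρa : ρ a = a := by rw [ha]; exact fix_aeval _ ρ_X2 _
  have hρb : ρ b = b := by rw [hb]; exact fix_aeval _ ρ_X2 _
  have hΦH : Φ Hh = Hh := by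
    rw [hH]
    simp only [map_add, map_sub, map_mul, hΦa, hΦb, hΦc, Φ_X1, Φ_X3, Φ_X4, Φ_X5, Φ_C]
  have hΦu : Φ u = 0 := by
    rw [hu]
    simp only [map_sub, map_mul, Φ_X0, Φ_X1, Φ_X2, sub_self]
  have hΦG2 : Φ G2 = X 1 ^ (p - 1) * a := by
    rw [hG2, comp_aeval_apply]
    have hv : (fun j => Φ (![(X 0 : R6), X 1] j)) = fun j => X 1 * (![(X 2 : R6), 1] j) := by
      funext j; fin_cases j <;> simp
    rw [hv, scale hg2hom, ha]
  have hΦG1 : Φ G1 = X 1 ^ (p - 1) * b := by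
    rw [hG1, comp_aeval_apply]
    have hv : (fun j => Φ (![(X 0 : R6), X 1] j)) = fun j => X 1 * (![(X 2 : R6), 1] j) := by
      funext j; fin_cases j <;> simp
    rw [hv, scale hg1hom, hb]
  -- F ≡ X1^(p-2) Hh mod u
  have m2 : G2 - X 1 ^ (p - 1) * a ∈ Ideal.span {u} := by
    have h0 := sub_Φ_mem G2
    rw [hΦG2] at h0
    rwa [← hu] at h0
  have m1 : G1 - X 1 ^ (p - 1) * b ∈ Ideal.span {u} := by
    have h0 := sub_Φ_mem G1
    rw [hΦG1] at h0
    rwa [← hu] at h0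
  have keyF : F - X 1 ^ (p - 2) * Hh ∈ Ideal.span {u} := by
    have heq : F - X 1 ^ (p - 2) * Hh
        = (G2 - X 1 ^ (p - 1) * a) * X 3 - (G1 - X 1 ^ (p - 1) * b) * X 4 := by
      have hpow : (X 1 : R6) ^ (p - 1) = X 1 ^ (p - 2) * X 1 := by
        rw [← pow_succ]
        congr 1
        omega
      rw [hF, hE, hH, hpow]
      ring
    rw [heq]
    exact Ideal.sub_mem _ (Ideal.mul_mem_right _ _ m2) (Ideal.mul_mem_right _ _ m1)
  have hspanu : Ideal.span {u} ≤ Ideal.span {u, Hh} := by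
    rw [Ideal.span_le, Set.singleton_subset_iff]
    exact hu2
  have hF2 : F ∈ Ideal.span {u, Hh} := by
    have h3 := Ideal.add_mem _ (Ideal.mul_mem_left _ (X 1 ^ (p - 2)) hH2) (hspanu keyF)
    rwa [show X 1 ^ (p - 2) * Hh + (F - X 1 ^ (p - 2) * Hh) = F by ring] at h3
  have hF1 : F ∈ Ideal.span {(X 5 : R6), E} := by
    rw [hF]
    exact Ideal.add_mem _ hE1 (Ideal.mul_mem_left _ _ hξ1)
  -- the two inclusions
  apply le_antisymm
  · rw [Ideal.span_le]
    rintro x (rfl | rfl | rfl)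
    · exact Ideal.mem_inf.mpr ⟨Ideal.mul_mem_left _ _ hξ1, Ideal.mul_mem_right _ _ hu2⟩
    · exact Ideal.mem_inf.mpr ⟨hF1, hF2⟩
    · exact Ideal.mem_inf.mpr ⟨Ideal.mul_mem_left _ _ hξ1, Ideal.mul_mem_right _ _ hH2⟩
  · intro f hf
    obtain ⟨hf1, hf2⟩ := Ideal.mem_inf.mp hf
    obtain ⟨α, β, hαβ⟩ := Ideal.mem_span_pair.mp hf1
    set t := α - β * (C ((p : ℂ)) * X 1 ^ (p - 2) * c) with ht
    have hfF : f = β * F + t * X 5 := by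
      rw [hF]
      linear_combination -hαβ - X 5 * ht
    have htξ2 : t * X 5 ∈ Ideal.span {u, Hh} := by
      have h1 : f - β * F ∈ Ideal.span {u, Hh} :=
        Ideal.sub_mem _ hf2 (Ideal.mul_mem_left _ _ hF2)
      rwa [show f - β * F = t * X 5 by linear_combination hfF] at h1
    obtain ⟨γ, δ, hγδ⟩ := Ideal.mem_span_pair.mp htξ2
    have hΦeq : Φ δ * Hh = Φ t * X 5 := by
      have h0 := congrArg Φ hγδ
      simp only [map_add, map_mul] at h0
      rw [hΦu, hΦH, Φ_X5, mul_zero, zero_add] at h0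
      exact h0
    have hσH : σ₀ Hh = X 1 * a * X 3 - X 1 * b * X 4 := by
      rw [hH]
      simp only [map_add, map_sub, map_mul, hσa, hσb, hσc, σ₀_X1, σ₀_X3, σ₀_X4, σ₀_X5, σ₀_C,
        mul_zero, add_zero]
    have hσHne : σ₀ Hh ≠ 0 := by
      rw [hσH]
      intro h0
      have h1 := congrArg ρ h0
      simp only [map_sub, map_mul, map_zero, ρ_X1, ρ_X3, ρ_X4, hρa, hρb, mul_one, mul_zero,
        sub_zero] at h1
      rcases mul_eq_zero.mp h1 with h | h
      · exact X_ne_zero _ h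
      · exact hane h
    have hδξ : Φ δ ∈ Ideal.span {(X 5 : R6)} := by
      apply mem_span_X5_of_σ₀
      have h0 := congrArg σ₀ hΦeq
      simp only [map_mul] at h0
      rw [σ₀_X5, mul_zero] at h0
      exact (mul_eq_zero.mp h0).resolve_right hσHne
    obtain ⟨δ'', hδ''⟩ := Ideal.mem_span_singleton.mp hδξ
    obtain ⟨e, he⟩ : ∃ e, δ - Φ δ = u * e := by
      have h0 := sub_Φ_mem δ
      rw [← hu] at h0
      exact Ideal.mem_span_singleton.mp h0
    have hσu : σ₀ u ≠ 0 := by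
      rw [hu]
      simp only [map_sub, map_mul, σ₀_X0, σ₀_X1, σ₀_X2]
      intro h0
      have h1 := congrArg (eval (fun i : Fin 6 => if i = 0 then (1 : ℂ) else 0)) h0
      simp at h1
    have hwmem : γ + e * Hh ∈ Ideal.span {(X 5 : R6)} := by
      apply mem_span_X5_of_σ₀
      have hkey : u * (γ + e * Hh) = X 5 * (t - δ'' * Hh) := by
        linear_combination hγδ - Hh * he - Hh * hδ''
      have h0 := congrArg σ₀ hkey
      simp only [map_mul] at h0
      rw [σ₀_X5, zero_mul] at h0
      exact (mul_eq_zero.mp h0).resolve_left hσu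
    obtain ⟨w, hw⟩ := Ideal.mem_span_singleton.mp hwmem
    have hfin : f = β * F + w * (u * X 5) + δ'' * (Hh * X 5) := by
      linear_combination hfF - hγδ + Hh * he + Hh * hδ'' + u * hw
    rw [hfin]
    exact Ideal.add_mem _ (Ideal.add_mem _ (Ideal.mul_mem_left _ _ hFI)
      (Ideal.mul_mem_left _ _ huξ)) (Ideal.mul_mem_left _ _ hHξ)
end

section
/- Let n ≥ 1, let α_1,…,α_n be positive rational numbers, and let χ be the ℂ-linear derivation ∑_{i=1}^n α_i x_i ∂_i of ℂ[x_1,…,x_n] (the rationals α_i being cast into ℂ). Let f ∈ ℂ[x_1,…,x_n] be nonzero with zero constant coefficient, and let q ∈ ℂ[x_1,…,x_n] satisfy χ(f) = q·f. Then there exists an exponent γ = (γ_1,…,γ_n) in the support of f such that the constant coefficient of q equals ∑_{i=1}^n α_iγ_i; in particular, the constant coefficient of q is a strictly positive rational number. -/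
open MvPolynomial

lemma X_mul_pderiv_monomial_s14 {σ : Type*} {R : Type*} [CommSemiring R] [DecidableEq σ]
    (i : σ) (s : σ →₀ ℕ) (a : R) :
    X i * pderiv i (monomial s a) = monomial s (a * s i) := by
  rw [pderiv_monomial]
  rcases Nat.eq_zero_or_pos (s i) with h | h
  · simp [h]
  · have : X i * monomial (s - Finsupp.single i 1) (a * s i)
        = monomial (Finsupp.single i 1 + (s - Finsupp.single i 1)) (a * s i) := by
      rw [monomial_single_add, pow_one]
    rw [this, add_tsub_cancel_of_le (Finsupp.single_le_iff.mpr h)]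

lemma coeff_X_mul_pderiv {σ : Type*} {R : Type*} [CommSemiring R] [DecidableEq σ]
    (i : σ) (d : σ →₀ ℕ) (f : MvPolynomial σ R) :
    coeff d (X i * pderiv i f) = (d i : R) * coeff d f := by
  induction f using MvPolynomial.induction_on' with
  | monomial s a =>
    rw [_root_.X_mul_pderiv_monomial_s14, coeff_monomial, coeff_monomial]
    split
    · next h => subst h; ring
    · simp
  | add p q hp hq =>
    rw [map_add, mul_add, coeff_add, hp, hq, coeff_add, mul_add]

/-- If `χ = ∑ αᵢ xᵢ ∂ᵢ` is an Euler vector field with positive rational weights,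
`f` is nonzero with zero constant coefficient and `χ(f) = q·f`, then the constant
coefficient of `q` is `∑ αᵢγᵢ` for some exponent `γ` in the support of `f`; in
particular it is a strictly positive rational number. -/
theorem stmt_14 (n : ℕ) (hn : 1 ≤ n) (α : Fin n → ℚ) (hα : ∀ i, 0 < α i)
    (f q : MvPolynomial (Fin n) ℂ) (hf : f ≠ 0) (hf0 : MvPolynomial.coeff 0 f = 0)
    (hχ : ∑ i : Fin n, (C ((α i : ℂ)) : MvPolynomial (Fin n) ℂ) * X i * pderiv i f
        = q * f) :
    (∃ γ ∈ f.support, MvPolynomial.coeff 0 q = ∑ i : Fin n, ((α i : ℂ)) * (γ i : ℂ)) ∧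
      ∃ r : ℚ, 0 < r ∧ MvPolynomial.coeff 0 q = (r : ℂ) := by
  classical
  set w : (Fin n →₀ ℕ) → ℚ := fun d => ∑ i : Fin n, α i * d i with hw
  have hwnn : ∀ d, 0 ≤ w d := fun d =>
    Finset.sum_nonneg fun i _ => mul_nonneg (hα i).le (Nat.cast_nonneg _)
  obtain ⟨γ, hγmem, hγmin⟩ := f.support.exists_min_image w (support_nonempty.mpr hf)
  have hγf : coeff γ f ≠ 0 := mem_support_iff.mp hγmem
  -- coefficient of γ in the LHS
  have hL : coeff γ (∑ i : Fin n, (C ((α i : ℂ)) : MvPolynomial (Fin n) ℂ)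
      * X i * pderiv i f) = (∑ i : Fin n, (α i : ℂ) * (γ i : ℂ)) * coeff γ f := by
    rw [coeff_sum, Finset.sum_mul]
    refine Finset.sum_congr rfl fun i _ => ?_
    rw [mul_assoc, coeff_C_mul, coeff_X_mul_pderiv]
    ring
  -- coefficient of γ in the RHS
  have hR : coeff γ (q * f) = coeff 0 q * coeff γ f := by
    rw [coeff_mul]
    refine Finset.sum_eq_single_of_mem ((0 : Fin n →₀ ℕ), γ) (by simp) ?_
    rintro ⟨a, b⟩ hab hne
    have habγ : a + b = γ := Finset.HasAntidiagonal.mem_antidiagonal.mp hab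
    have ha : a ≠ 0 := by
      rintro rfl
      simp only [zero_add] at habγ
      exact hne (by rw [habγ])
    suffices hb : coeff b f = 0 by rw [hb, mul_zero]
    by_contra hb
    have hbmem : b ∈ f.support := mem_support_iff.mpr hb
    have h1 : w γ ≤ w b := hγmin b hbmem
    have h2 : w γ = w a + w b := by
      rw [← habγ, hw]
      simp only [Finsupp.add_apply, Nat.cast_add]
      rw [← Finset.sum_add_distrib]
      exact Finset.sum_congr rfl fun i _ => by ring
    have hwa : 0 < w a := by
      obtain ⟨j, hj⟩ := Finsupp.ne_iff.mp ha
      simp only [Finsupp.coe_zero, Pi.zero_apply] at hj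
      have : 0 < α j * a j :=
        mul_pos (hα j) (by exact_mod_cast Nat.pos_of_ne_zero hj)
      exact lt_of_lt_of_le this (Finset.single_le_sum
        (fun i _ => mul_nonneg (hα i).le (Nat.cast_nonneg _)) (Finset.mem_univ j))
    linarith
  have key : coeff 0 q = ∑ i : Fin n, (α i : ℂ) * (γ i : ℂ) := by
    have := hχ ▸ hL
    rw [hR] at this
    exact mul_right_cancel₀ hγf this
  refine ⟨⟨γ, hγmem, key⟩, w γ, ?_, ?_⟩
  · have hγ0 : γ ≠ 0 := by
      rintro rfl
      exact hγf hf0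
    obtain ⟨j, hj⟩ := Finsupp.ne_iff.mp hγ0
    simp only [Finsupp.coe_zero, Pi.zero_apply] at hj
    have : 0 < α j * γ j :=
      mul_pos (hα j) (by exact_mod_cast Nat.pos_of_ne_zero hj)
    exact lt_of_lt_of_le this (Finset.single_le_sum
      (fun i _ => mul_nonneg (hα i).le (Nat.cast_nonneg _)) (Finset.mem_univ j))
  · rw [key, hw]
    push_cast
    rfl
end

section
/- In the polynomial ring R = ℂ[x_1,x_2,x_3,ξ_1,ξ_2,ξ_3], let P and Q be any two elements of the ideal generated by x_1 and x_2. Then the sequence (x_1 − x_2x_3, P, Q) is not a regular sequence on R. -/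
open MvPolynomial

private noncomputable abbrev Rr := MvPolynomial (Fin 6) ℂ

private noncomputable def gsub : Fin 6 → Rr := fun i => if i = 0 then X 1 * X 2 else X i

private lemma key_sub (r : Rr) :
    r - aeval gsub r ∈ Ideal.span {(X 0 : Rr) - X 1 * X 2} := by
  induction r using MvPolynomial.induction_on with
  | C s => simp
  | add u v hu hv =>
      have := Ideal.add_mem _ hu hv
      simpa [map_add, add_sub_add_comm] using this
  | mul_X u i hu =>
      have heq : u * X i - aeval gsub (u * X i)
          = (u - aeval gsub u) * X i + aeval gsub u * (X i - gsub i) := by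
        simp only [map_mul, aeval_X]; ring
      rw [heq]
      refine Ideal.add_mem _ (Ideal.mul_mem_right _ _ hu) (Ideal.mul_mem_left _ _ ?_)
      by_cases h : i = 0
      · subst h; simp only [gsub, if_pos rfl]; exact Ideal.subset_span rfl
      · simp [gsub, h]

private lemma prime_f : (Ideal.span {(X 0 : Rr) - X 1 * X 2}).IsPrime := by
  have hker : Ideal.span {(X 0 : Rr) - X 1 * X 2} = RingHom.ker (aeval gsub).toRingHom := by
    apply le_antisymm
    · rw [Ideal.span_le]
      rintro x rfl
      simp [RingHom.mem_ker, gsub]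
    · intro r hr
      rw [RingHom.mem_ker] at hr
      have := key_sub r
      have hr' : aeval gsub r = 0 := hr
      rwa [hr', sub_zero] at this
  rw [hker]
  exact RingHom.ker_isPrime _

private lemma smul_top_eq (I : Ideal Rr) : I • (⊤ : Submodule Rr Rr) = I := by
  rw [smul_eq_mul, Ideal.mul_top]

/-- In `R = ℂ[x₁,x₂,x₃,ξ₁,ξ₂,ξ₃]` (variables `0,1,2` are the `xᵢ`), for any two
elements `P, Q` of the ideal `(x₁, x₂)`, the sequence `(x₁ - x₂x₃, P, Q)` is not
a regular sequence on `R`. -/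
theorem stmt_15 (P Q : MvPolynomial (Fin 6) ℂ)
    (hP : P ∈ Ideal.span {(X 0 : MvPolynomial (Fin 6) ℂ), X 1})
    (hQ : Q ∈ Ideal.span {(X 0 : MvPolynomial (Fin 6) ℂ), X 1}) :
    ¬ RingTheory.Sequence.IsRegular (MvPolynomial (Fin 6) ℂ)
        [(X 0 : MvPolynomial (Fin 6) ℂ) - X 1 * X 2, P, Q] := by
  intro hreg
  set f : Rr := (X 0 : Rr) - X 1 * X 2 with hf
  obtain ⟨a, b, hab⟩ := Ideal.mem_span_pair.mp hP
  obtain ⟨c, d, hcd⟩ := Ideal.mem_span_pair.mp hQ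
  set p : Rr := a * X 2 + b with hp
  set q : Rr := c * X 2 + d with hq
  have hPf : P = X 1 * p + a * f := by rw [← hab, hp, hf]; ring
  have hQf : Q = X 1 * q + c * f := by rw [← hcd, hq, hf]; ring
  obtain ⟨⟨hw⟩, htop⟩ := hreg
  -- `1 ∉ span {f}`
  have hone : (1 : Rr) ∉ Ideal.span {f} := by
    intro h1
    apply htop
    rw [eq_comm, smul_top_eq, Ideal.eq_top_iff_one]
    have : Ideal.span {f} ≤ Ideal.ofList [f, P, Q] :=
      Ideal.span_le.mpr (by rintro x rfl; exact Ideal.subset_span (by simp))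
    exact this h1
  have h1 : IsSMulRegular (Rr ⧸ (Ideal.ofList ([f, P, Q].take 1) • ⊤ : Submodule Rr Rr))
      (f :: [P, Q])[1] := hw 1 (by norm_num)
  have h2 : IsSMulRegular (Rr ⧸ (Ideal.ofList ([f, P, Q].take 2) • ⊤ : Submodule Rr Rr))
      (f :: [P, Q])[2] := hw 2 (by norm_num)
  simp only [List.take_succ_cons, List.take_zero, List.getElem_cons_succ,
    List.getElem_cons_zero] at h1 h2
  -- step 1: from regularity of Q mod (f, P), get p ∈ (f, P)
  have hJ : (Ideal.ofList [f, P] • ⊤ : Submodule Rr Rr) = Ideal.span {f, P} := by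
    rw [smul_top_eq]
    simp only [Ideal.ofList_cons, Ideal.ofList_nil, sup_bot_eq, Ideal.span_insert]
  have hQp : Q * p ∈ Ideal.span ({f, P} : Set Rr) := by
    have : Q * p = q * P + (c * p - a * q) * f := by rw [hPf, hQf]; ring
    rw [this]
    exact Ideal.add_mem _
      (Ideal.mul_mem_left _ _ (Ideal.subset_span (by simp)))
      (Ideal.mul_mem_left _ _ (Ideal.subset_span (by simp)))
  have hmem : p ∈ Ideal.span ({f, P} : Set Rr) := by
    have h0 : Q • (Submodule.Quotient.mk p :
        Rr ⧸ (Ideal.ofList [f, P] • ⊤ : Submodule Rr Rr)) = Q • 0 := by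
      rw [smul_zero, ← Submodule.Quotient.mk_smul, Submodule.Quotient.mk_eq_zero, hJ]
      exact hQp
    have := h2 h0
    rwa [Submodule.Quotient.mk_eq_zero, hJ] at this
  obtain ⟨u, v, huv⟩ := Ideal.mem_span_pair.mp hmem
  -- p * (1 - v * X 1) ∈ (f)
  have hfac : p * (1 - v * X 1) ∈ Ideal.span {f} := by
    have : p * (1 - v * X 1) = (u + v * a) * f := by
      rw [← sub_eq_zero] at huv ⊢
      rw [hPf] at huv
      linear_combination -huv
    rw [this]
    exact Ideal.mul_mem_left _ _ (Ideal.subset_span rfl)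
  rcases prime_f.mem_or_mem hfac with hpf | hvf
  · -- p ∈ (f), so P ∈ (f), contradicting regularity of P mod (f)
    have hPmem : P ∈ Ideal.span {f} := by
      rw [hPf]
      exact Ideal.add_mem _ (Ideal.mul_mem_left _ _ hpf)
        (Ideal.mul_mem_left _ _ (Ideal.subset_span rfl))
    have hJ1 : (Ideal.ofList [f] • ⊤ : Submodule Rr Rr) = Ideal.span {f} := by
      rw [smul_top_eq, Ideal.ofList_singleton]
    have h0 : P • (Submodule.Quotient.mk 1 :
        Rr ⧸ (Ideal.ofList [f] • ⊤ : Submodule Rr Rr)) = P • 0 := by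
      rw [smul_zero, ← Submodule.Quotient.mk_smul, Submodule.Quotient.mk_eq_zero, hJ1]
      simpa using hPmem
    have := h1 h0
    rw [Submodule.Quotient.mk_eq_zero, hJ1] at this
    exact hone this
  · -- 1 - v * X 1 ∈ (f): evaluate at 0 gives 1 = 0
    obtain ⟨w, hw'⟩ := Ideal.mem_span_singleton'.mp hvf
    have := congrArg (eval (fun _ : Fin 6 => (0 : ℂ))) hw'
    simp [hf] at this
end
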